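/- If m is a 1-bounded hemimetric on a set Ω and μ, ν, η are finitely supported probability distributions on Ω, then the Wasserstein lifting W(m) over finitely supported distributions satisfies the triangle inequality: W(m)(μ,ν) ≤ W(m)(μ,η) + W(m)(η,ν). -/

import Mathlib

open scoped Classical

/-- A finitely supported probability distribution, as a finitely supported
nonnegative real-valued function summing to 1. -/
def IsFinDist {Ω : Type*} (μ : Ω →₀ ℝ) : Prop :=
  (∀ a, 0 ≤ μ a) ∧ μ.sum (fun _ r => r) = 1

/-- `w` is a (finitely supported) coupling of `μ` and `ν`. -/
def IsFinCoupling {Ω : Type*} (w : (Ω × Ω) →₀ ℝ) (μ ν : Ω →₀ ℝ) : Prop :=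
  IsFinDist w ∧
  (∀ a, (w.sum fun p r => if p.1 = a then r else 0) = μ a) ∧
  (∀ b, (w.sum fun p r => if p.2 = b then r else 0) = ν b)

/-- The Wasserstein lifting over finitely supported distributions. -/
noncomputable def finWasserstein {Ω : Type*} (m : Ω → Ω → ℝ) (μ ν : Ω →₀ ℝ) : ℝ :=
  sInf {r : ℝ | ∃ w : (Ω × Ω) →₀ ℝ, IsFinCoupling w μ ν ∧
    r = w.sum fun p q => q * m p.1 p.2}

section Helpers

variable {Ω : Type*}

lemma ddsum_sum {α β : Type*} (s : Finset α) (t : Finset β)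
    (x : α → β → Ω × Ω) (v : α → β → ℝ) (G : Ω × Ω → ℝ → ℝ)
    (h0 : ∀ z, G z 0 = 0) (hadd : ∀ z r1 r2, G z (r1 + r2) = G z r1 + G z r2) :
    ((∑ p ∈ s, ∑ q ∈ t, Finsupp.single (x p q) (v p q)).sum G)
      = ∑ p ∈ s, ∑ q ∈ t, G (x p q) (v p q) := by
  rw [← Finsupp.sum_finset_sum_index h0 hadd]
  refine Finset.sum_congr rfl fun p _ => ?_
  rw [← Finsupp.sum_finset_sum_index h0 hadd]
  exact Finset.sum_congr rfl fun q _ => Finsupp.sum_single_index (h0 _)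

lemma ddsum_nonneg {α β : Type*} (s : Finset α) (t : Finset β)
    (x : α → β → Ω × Ω) (v : α → β → ℝ) (hv : ∀ p q, 0 ≤ v p q) (z : Ω × Ω) :
    0 ≤ (∑ p ∈ s, ∑ q ∈ t, Finsupp.single (x p q) (v p q)) z := by
  rw [Finset.sum_apply']
  refine Finset.sum_nonneg fun p _ => ?_
  rw [Finset.sum_apply']
  refine Finset.sum_nonneg fun q _ => ?_
  rw [Finsupp.single_apply]
  split_ifs
  exacts [hv p q, le_rfl]

lemma sum_ite_support (μ : Ω →₀ ℝ) (a0 : Ω) :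
    (∑ a ∈ μ.support, if a = a0 then μ a else 0) = μ a0 := by
  rw [Finset.sum_ite_eq' μ.support a0 μ]
  split_ifs with h
  · rfl
  · exact (Finsupp.notMem_support_iff.1 h).symm

lemma finsupp_sum_eq (μ : Ω →₀ ℝ) (g : Ω → ℝ → ℝ) :
    μ.sum g = ∑ a ∈ μ.support, g a (μ a) := rfl

lemma exists_fin_coupling (μ ν : Ω →₀ ℝ) (hμ : IsFinDist μ) (hν : IsFinDist ν) :
    ∃ w : (Ω × Ω) →₀ ℝ, IsFinCoupling w μ ν := by
  have hν1 : ∑ c ∈ ν.support, ν c = 1 := hν.2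
  have hμ1 : ∑ a ∈ μ.support, μ a = 1 := hμ.2
  refine ⟨∑ a ∈ μ.support, ∑ c ∈ ν.support, Finsupp.single (a, c) (μ a * ν c),
    ⟨fun z => ddsum_nonneg _ _ _ _ (fun a c => mul_nonneg (hμ.1 a) (hν.1 c)) z, ?_⟩, ?_, ?_⟩
  · rw [ddsum_sum _ _ _ _ _ (fun z => rfl) (fun z r1 r2 => rfl)]
    calc (∑ a ∈ μ.support, ∑ c ∈ ν.support, μ a * ν c)
        = ∑ a ∈ μ.support, μ a := by
          refine Finset.sum_congr rfl fun a _ => ?_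
          rw [← Finset.mul_sum, hν1, mul_one]
      _ = 1 := hμ1
  · intro a0
    rw [ddsum_sum _ _ _ _ (fun z r => if z.1 = a0 then r else 0)
      (fun z => by simp) (fun z r1 r2 => by split_ifs <;> simp)]
    calc (∑ a ∈ μ.support, ∑ c ∈ ν.support, if a = a0 then μ a * ν c else 0)
        = ∑ a ∈ μ.support, if a = a0 then μ a else 0 := by
          refine Finset.sum_congr rfl fun a _ => ?_
          split_ifs with h
          · rw [← Finset.mul_sum, hν1, mul_one]
          · simp
      _ = μ a0 := sum_ite_support μ a0
  · intro c0
    rw [ddsum_sum _ _ _ _ (fun z r => if z.2 = c0 then r else 0)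
      (fun z => by simp) (fun z r1 r2 => by split_ifs <;> simp)]
    have hterm : ∀ a ∈ μ.support, (∑ c ∈ ν.support, if c = c0 then μ a * ν c else 0)
        = μ a * ν c0 := by
      intro a _
      have : ∀ c ∈ ν.support, (if c = c0 then μ a * ν c else 0)
          = μ a * (if c = c0 then ν c else 0) := by
        intro c _
        split_ifs <;> simp
      rw [Finset.sum_congr rfl this, ← Finset.mul_sum, sum_ite_support ν c0]
    rw [Finset.sum_congr rfl hterm, ← Finset.sum_mul, hμ1, one_mul]

lemma cost_nonneg (m : Ω → Ω → ℝ) (hm0 : ∀ a b, 0 ≤ m a b)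
    (w : (Ω × Ω) →₀ ℝ) (hw : ∀ z, 0 ≤ w z) :
    0 ≤ w.sum fun p q => q * m p.1 p.2 := by
  rw [finsupp_sum_eq]
  exact Finset.sum_nonneg fun p _ => mul_nonneg (hw p) (hm0 _ _)

/-- Gluing two couplings: the cost of the glued coupling is at most the sum of costs. -/
lemma glue_couplings (m : Ω → Ω → ℝ)
    (hm0 : ∀ a b, 0 ≤ m a b) (htri : ∀ a b c, m a b ≤ m a c + m c b)
    (μ ν η : Ω →₀ ℝ) (hη : IsFinDist η)
    (w1 w2 : (Ω × Ω) →₀ ℝ) (hw1 : IsFinCoupling w1 μ η) (hw2 : IsFinCoupling w2 η ν) :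
    ∃ w3 : (Ω × Ω) →₀ ℝ, IsFinCoupling w3 μ ν ∧
      (w3.sum fun p q => q * m p.1 p.2) ≤
        (w1.sum fun p q => q * m p.1 p.2) + (w2.sum fun p q => q * m p.1 p.2) := by
  -- positivity of η on relevant points
  have hw1nn : ∀ p, 0 ≤ w1 p := hw1.1.1
  have hw2nn : ∀ p, 0 ≤ w2 p := hw2.1.1
  have hηsupp1 : ∀ p ∈ w1.support, 0 < η p.2 := by
    intro p hp
    have h := hw1.2.2 p.2
    rw [finsupp_sum_eq] at h
    have hle : w1 p ≤ ∑ p' ∈ w1.support, if p'.2 = p.2 then w1 p' else 0 := by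
      have := Finset.single_le_sum (f := fun p' => if p'.2 = p.2 then w1 p' else 0)
        (fun p' _ => by split_ifs; exacts [hw1nn p', le_rfl]) hp
      simpa using this
    have hpos : 0 < w1 p := lt_of_le_of_ne (hw1nn p) (Ne.symm (Finsupp.mem_support_iff.1 hp))
    linarith [h ▸ hle]
  have hηsupp2 : ∀ q ∈ w2.support, 0 < η q.1 := by
    intro q hq
    have h := hw2.2.1 q.1
    rw [finsupp_sum_eq] at h
    have hle : w2 q ≤ ∑ q' ∈ w2.support, if q'.1 = q.1 then w2 q' else 0 := by
      have := Finset.single_le_sum (f := fun q' => if q'.1 = q.1 then w2 q' else 0)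
        (fun q' _ => by split_ifs; exacts [hw2nn q', le_rfl]) hq
      simpa using this
    have hpos : 0 < w2 q := lt_of_le_of_ne (hw2nn q) (Ne.symm (Finsupp.mem_support_iff.1 hq))
    linarith [h ▸ hle]
  -- the glued weights
  set v : (Ω × Ω) → (Ω × Ω) → ℝ :=
    fun p q => if p.2 = q.1 then w1 p * w2 q / η p.2 else 0 with hv
  have hvnn : ∀ p q, 0 ≤ v p q := by
    intro p q
    simp only [hv]
    split_ifs with h
    · exact div_nonneg (mul_nonneg (hw1nn p) (hw2nn q)) (hη.1 p.2)
    · exact le_rfl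
  -- inner sums
  have key1 : ∀ p ∈ w1.support, (∑ q ∈ w2.support, if p.2 = q.1 then w2 q else 0) = η p.2 := by
    intro p _
    have h := hw2.2.1 p.2
    rw [finsupp_sum_eq] at h
    rw [← h]
    exact Finset.sum_congr rfl fun q _ => by simp [eq_comm]
  have key2 : ∀ b, (∑ p ∈ w1.support, if p.2 = b then w1 p else 0) = η b := by
    intro b
    have h := hw1.2.2 b
    rw [finsupp_sum_eq] at h
    exact h
  have inner1 : ∀ p ∈ w1.support, (∑ q ∈ w2.support, v p q) = w1 p := by
    intro p hp
    have : (∑ q ∈ w2.support, v p q)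
        = w1 p / η p.2 * ∑ q ∈ w2.support, if p.2 = q.1 then w2 q else 0 := by
      rw [Finset.mul_sum]
      refine Finset.sum_congr rfl fun q _ => ?_
      simp only [hv]
      split_ifs with h
      · ring
      · ring
    rw [this, key1 p hp, div_mul_cancel₀]
    exact (hηsupp1 p hp).ne'
  have inner2 : ∀ q ∈ w2.support, (∑ p ∈ w1.support, v p q) = w2 q := by
    intro q hq
    have : (∑ p ∈ w1.support, v p q)
        = w2 q / η q.1 * ∑ p ∈ w1.support, if p.2 = q.1 then w1 p else 0 := by
      rw [Finset.mul_sum]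
      refine Finset.sum_congr rfl fun p _ => ?_
      simp only [hv]
      split_ifs with h
      · rw [h]; ring
      · ring
    rw [this, key2 q.1, div_mul_cancel₀]
    exact (hηsupp2 q hq).ne'
  refine ⟨∑ p ∈ w1.support, ∑ q ∈ w2.support, Finsupp.single (p.1, q.2) (v p q),
    ⟨⟨fun z => ddsum_nonneg _ _ _ _ hvnn z, ?_⟩, ?_, ?_⟩, ?_⟩
  · -- total mass 1
    rw [ddsum_sum _ _ _ _ _ (fun z => rfl) (fun z r1 r2 => rfl)]
    calc (∑ p ∈ w1.support, ∑ q ∈ w2.support, v p q)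
        = ∑ p ∈ w1.support, w1 p := Finset.sum_congr rfl inner1
      _ = 1 := hw1.1.2
  · -- first marginal
    intro a0
    rw [ddsum_sum _ _ _ _ (fun z r => if z.1 = a0 then r else 0)
      (fun z => by simp) (fun z r1 r2 => by split_ifs <;> simp)]
    have h := hw1.2.1 a0
    rw [finsupp_sum_eq] at h
    rw [← h]
    refine Finset.sum_congr rfl fun p hp => ?_
    dsimp only
    split_ifs with hcond
    · exact inner1 p hp
    · exact Finset.sum_const_zero
  · -- second marginal
    intro c0
    rw [ddsum_sum _ _ _ _ (fun z r => if z.2 = c0 then r else 0)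
      (fun z => by simp) (fun z r1 r2 => by split_ifs <;> simp)]
    rw [Finset.sum_comm]
    have h := hw2.2.2 c0
    rw [finsupp_sum_eq] at h
    rw [← h]
    refine Finset.sum_congr rfl fun q hq => ?_
    dsimp only
    split_ifs with hcond
    · exact inner2 q hq
    · exact Finset.sum_const_zero
  · -- cost bound
    rw [ddsum_sum _ _ _ _ (fun z r => r * m z.1 z.2)
      (fun z => by simp) (fun z r1 r2 => by ring)]
    have hbound : ∀ p ∈ w1.support, ∀ q ∈ w2.support,
        v p q * m p.1 q.2 ≤ v p q * m p.1 p.2 + v p q * m q.1 q.2 := by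
      intro p _ q _
      by_cases h : p.2 = q.1
      · have h1 : m p.1 q.2 ≤ m p.1 p.2 + m q.1 q.2 := by
          have := htri p.1 q.2 p.2
          rw [h] at this ⊢
          exact this
        calc v p q * m p.1 q.2 ≤ v p q * (m p.1 p.2 + m q.1 q.2) :=
              mul_le_mul_of_nonneg_left h1 (hvnn p q)
          _ = v p q * m p.1 p.2 + v p q * m q.1 q.2 := by ring
      · simp [hv, h]
    calc (∑ p ∈ w1.support, ∑ q ∈ w2.support, v p q * m p.1 q.2)
        ≤ ∑ p ∈ w1.support, ∑ q ∈ w2.support,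
            (v p q * m p.1 p.2 + v p q * m q.1 q.2) := by
          refine Finset.sum_le_sum fun p hp => Finset.sum_le_sum fun q hq => ?_
          exact hbound p hp q hq
      _ = (∑ p ∈ w1.support, ∑ q ∈ w2.support, v p q * m p.1 p.2)
          + (∑ p ∈ w1.support, ∑ q ∈ w2.support, v p q * m q.1 q.2) := by
          rw [← Finset.sum_add_distrib]
          exact Finset.sum_congr rfl fun p _ => Finset.sum_add_distrib
      _ = (w1.sum fun p r => r * m p.1 p.2) + (w2.sum fun p r => r * m p.1 p.2) := by
          congr 1
          · rw [finsupp_sum_eq]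
            refine Finset.sum_congr rfl fun p hp => ?_
            rw [← Finset.sum_mul, inner1 p hp]
          · rw [finsupp_sum_eq, Finset.sum_comm]
            refine Finset.sum_congr rfl fun q hq => ?_
            rw [← Finset.sum_mul, inner2 q hq]

end Helpers

theorem finWasserstein_triangle {Ω : Type*} [Nonempty Ω]
    (m : Ω → Ω → ℝ)
    (hm0 : ∀ a b, 0 ≤ m a b) (hm1 : ∀ a b, m a b ≤ 1)
    (hrefl : ∀ a, m a a = 0)
    (htri : ∀ a b c, m a b ≤ m a c + m c b)
    (μ ν η : Ω →₀ ℝ) (hμ : IsFinDist μ) (hν : IsFinDist ν) (hη : IsFinDist η) :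
    finWasserstein m μ ν ≤ finWasserstein m μ η + finWasserstein m η ν := by
  set S : Set ℝ := {r : ℝ | ∃ w : (Ω × Ω) →₀ ℝ, IsFinCoupling w μ ν ∧
    r = w.sum fun p q => q * m p.1 p.2} with hS
  set S1 : Set ℝ := {r : ℝ | ∃ w : (Ω × Ω) →₀ ℝ, IsFinCoupling w μ η ∧
    r = w.sum fun p q => q * m p.1 p.2} with hS1
  set S2 : Set ℝ := {r : ℝ | ∃ w : (Ω × Ω) →₀ ℝ, IsFinCoupling w η ν ∧
    r = w.sum fun p q => q * m p.1 p.2} with hS2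
  have hSbdd : BddBelow S := ⟨0, fun r hr => by
    obtain ⟨w, hw, rfl⟩ := hr
    exact cost_nonneg m hm0 w hw.1.1⟩
  have hS1ne : S1.Nonempty := by
    obtain ⟨w, hw⟩ := exists_fin_coupling μ η hμ hη
    exact ⟨_, w, hw, rfl⟩
  have hS2ne : S2.Nonempty := by
    obtain ⟨w, hw⟩ := exists_fin_coupling η ν hη hν
    exact ⟨_, w, hw, rfl⟩
  have key : ∀ r1 ∈ S1, ∀ r2 ∈ S2, finWasserstein m μ ν ≤ r1 + r2 := by
    rintro r1 ⟨w1, hw1, rfl⟩ r2 ⟨w2, hw2, rfl⟩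
    obtain ⟨w3, hw3, hcost⟩ := glue_couplings m hm0 htri μ ν η hη w1 w2 hw1 hw2
    have hmem : (w3.sum fun p q => q * m p.1 p.2) ∈ S := ⟨w3, hw3, rfl⟩
    exact le_trans (csInf_le hSbdd hmem) hcost
  have step1 : ∀ r1 ∈ S1, finWasserstein m μ ν - r1 ≤ finWasserstein m η ν := by
    intro r1 hr1
    refine le_csInf hS2ne fun r2 hr2 => ?_
    have := key r1 hr1 r2 hr2
    linarith
  have step2 : finWasserstein m μ ν - finWasserstein m η ν ≤ finWasserstein m μ η := by
    refine le_csInf hS1ne fun r1 hr1 => ?_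
    have := step1 r1 hr1
    linarith
  linarith
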